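/- Let 𝒵 be a finite set, P a pmf on 𝒵 with full support, and define for pmfs Q₁, Q₂ on 𝒵 the relative entropies D(Qᵢ‖P). Then D(Q₁‖P) − D(Q₂‖P) = H(Q₂) − H(Q₁) − Σ_z (Q₁(z) − Q₂(z))·log₂ P(z), and consequently if ‖Q₁ − Q₂‖₁ ≤ 1/2 then |D(Q₁‖P) − D(Q₂‖P)| ≤ ‖Q₁−Q₂‖₁·log₂(|𝒵|/‖Q₁−Q₂‖₁) + ‖Q₁−Q₂‖₁·log₂(1/p_min), where p_min = min_z P(z). -/

import Mathlib

open Real Finset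

private lemma aux_F_convex : ConvexOn ℝ (Set.Icc (0:ℝ) (1/2))
    (fun x => x * Real.log x - (1-x) * Real.log (1-x)) := by
  set F : ℝ → ℝ := fun x => x * Real.log x - (1-x) * Real.log (1-x) with hFdef
  have hcont : Continuous F := by
    have h1 : Continuous fun x : ℝ => x * Real.log x := Real.continuous_mul_log
    have h2 : Continuous fun x : ℝ => (1-x) * Real.log (1-x) :=
      h1.comp (continuous_const.sub continuous_id)
    exact h1.sub h2
  have hderivAt : ∀ x ∈ Set.Ioo (0:ℝ) (1/2),
      HasDerivAt F (Real.log x + Real.log (1-x) + 2) x := by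
    intro x hx
    have hx0 : x ≠ 0 := ne_of_gt hx.1
    have hx1 : (1:ℝ) - x ≠ 0 := by have := hx.2; intro h; nlinarith
    have h1 : HasDerivAt (fun y : ℝ => y * Real.log y) (Real.log x + 1) x :=
      Real.hasDerivAt_mul_log hx0
    have h2' : HasDerivAt (fun y : ℝ => y * Real.log y) (Real.log (1-x) + 1) (1-x) :=
      Real.hasDerivAt_mul_log hx1
    have h3 : HasDerivAt (fun y : ℝ => 1 - y) (-1) x := by
      simpa using (hasDerivAt_id x).const_sub 1
    have h2 : HasDerivAt (fun y : ℝ => (1-y) * Real.log (1-y))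
        ((Real.log (1-x) + 1) * (-1)) x := h2'.comp x h3
    have := h1.sub h2
    exact this.congr_deriv (by ring)
  have hIoo : interior (Set.Icc (0:ℝ) (1/2)) = Set.Ioo (0:ℝ) (1/2) := interior_Icc
  refine convexOn_of_deriv2_nonneg (convex_Icc _ _) hcont.continuousOn ?_ ?_ ?_
  · rw [hIoo]
    exact fun x hx => ((hderivAt x hx).differentiableAt).differentiableWithinAt
  · rw [hIoo]
    intro x hx
    have hev : deriv F =ᶠ[nhds x] (fun y => Real.log y + Real.log (1-y) + 2) := by
      filter_upwards [Ioo_mem_nhds hx.1 hx.2] with y hy using (hderivAt y hy).deriv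
    have hg : DifferentiableAt ℝ (fun y : ℝ => Real.log y + Real.log (1-y) + 2) x := by
      have l1 : DifferentiableAt ℝ Real.log x := Real.differentiableAt_log (ne_of_gt hx.1)
      have l2 : DifferentiableAt ℝ (fun y : ℝ => Real.log (1-y)) x := by
        have : DifferentiableAt ℝ Real.log (1-x) :=
          Real.differentiableAt_log (by have := hx.2; intro h; nlinarith)
        exact this.comp x ((differentiableAt_const (1:ℝ)).sub differentiableAt_id)
      exact ((l1.add l2).add (differentiableAt_const 2))
    exact (hg.congr_of_eventuallyEq hev).differentiableWithinAt
  · rw [hIoo]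
    intro x hx
    have hev : deriv F =ᶠ[nhds x] (fun y => Real.log y + Real.log (1-y) + 2) := by
      filter_upwards [Ioo_mem_nhds hx.1 hx.2] with y hy using (hderivAt y hy).deriv
    have h2 : deriv (deriv F) x = deriv (fun y => Real.log y + Real.log (1-y) + 2) x :=
      hev.deriv_eq
    have hx1 : (1:ℝ) - x ≠ 0 := by have := hx.2; intro h; nlinarith
    have hg : HasDerivAt (fun y : ℝ => Real.log y + Real.log (1-y) + 2)
        (x⁻¹ + (1-x)⁻¹ * (-1)) x := by
      have l1 : HasDerivAt Real.log x⁻¹ x := Real.hasDerivAt_log (ne_of_gt hx.1)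
      have l3 : HasDerivAt (fun y : ℝ => 1 - y) (-1) x := by
        simpa using (hasDerivAt_id x).const_sub 1
      have l2 : HasDerivAt (fun y : ℝ => Real.log (1-y)) ((1-x)⁻¹ * (-1)) x :=
        (Real.hasDerivAt_log hx1).comp x l3
      exact (l1.add l2).add_const 2
    have : deriv^[2] F x = x⁻¹ - (1-x)⁻¹ := by
      show deriv (deriv F) x = _
      rw [h2, hg.deriv]; ring
    rw [this]
    have hxx : x ≤ 1 - x := by have := hx.2; linarith
    have : (1-x)⁻¹ ≤ x⁻¹ := by
      apply inv_anti₀ hx.1 hxx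
    linarith

private lemma aux_negMulLog_one_sub_le {d : ℝ} (h0 : 0 ≤ d) (h2 : d ≤ 1/2) :
    Real.negMulLog (1 - d) ≤ Real.negMulLog d := by
  have hF := aux_F_convex
  have hz : d ∈ segment ℝ (0:ℝ) (1/2) := by
    rw [segment_eq_Icc (by norm_num : (0:ℝ) ≤ 1/2)]
    exact ⟨h0, h2⟩
  have h := hF.le_on_segment (x := 0) (y := 1/2)
    (by constructor <;> norm_num) (by constructor <;> norm_num) hz
  norm_num at h
  simp only [Real.negMulLog, neg_mul]
  linarith [h]

private lemma aux_fourpoint {a b a' b' : ℝ} (ha : 0 ≤ a) (h1 : a ≤ a') (h2 : a ≤ b')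
    (h3 : a' ≤ b) (h4 : b' ≤ b) (hsum : a + b = a' + b') :
    Real.negMulLog a + Real.negMulLog b ≤ Real.negMulLog a' + Real.negMulLog b' := by
  rcases eq_or_lt_of_le (h1.trans h3) with hab | hab
  · have ha' : a' = a := le_antisymm (hab ▸ h3) h1
    have hb' : b' = b := by rw [ha'] at hsum; linarith
    rw [ha', hb', hab]
  · set s : ℝ := (b - a') / (b - a) with hs
    set t : ℝ := (a' - a) / (b - a) with ht
    have hba : (0:ℝ) < b - a := by linarith
    have hs0 : 0 ≤ s := div_nonneg (by linarith) (le_of_lt hba)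
    have ht0 : 0 ≤ t := div_nonneg (by linarith) (le_of_lt hba)
    have hst : s + t = 1 := by
      rw [hs, ht, ← add_div, div_eq_one_iff_eq (ne_of_gt hba)]
      ring
    have hma : a ∈ Set.Ici (0:ℝ) := ha
    have hmb : b ∈ Set.Ici (0:ℝ) := le_trans ha (by linarith)
    have hca : s • a + t • b = a' := by
      simp only [smul_eq_mul, hs, ht]; field_simp; ring
    have hca' : s * a + t * b = a' := by simpa [smul_eq_mul] using hca
    have hcb : t • a + s • b = b' := by
      have h1 : (s + t) * a = a := by rw [hst]; ring
      have h2 : (s + t) * b = b := by rw [hst]; ring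
      simp only [smul_eq_mul]
      linear_combination h1 + h2 - hca' + hsum
    have c1 := Real.concaveOn_negMulLog.2 hma hmb hs0 ht0 hst
    have c2 := Real.concaveOn_negMulLog.2 hma hmb ht0 hs0 (by linarith)
    rw [hca] at c1
    rw [hcb] at c2
    simp only [smul_eq_mul] at c1 c2
    have e : s * Real.negMulLog a + t * Real.negMulLog b +
        (t * Real.negMulLog a + s * Real.negMulLog b)
        = Real.negMulLog a + Real.negMulLog b := by
      linear_combination (Real.negMulLog a + Real.negMulLog b) * hst
    linarith [c1, c2, e]

private lemma aux_negMulLog_add_le {x y : ℝ} (hx : 0 ≤ x) (hy : 0 ≤ y) :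
    Real.negMulLog (x + y) ≤ Real.negMulLog x + Real.negMulLog y := by
  rcases hx.eq_or_lt with h | hxpos
  · simp [← h]
  rcases hy.eq_or_lt with h | hypos
  · simp [← h]
  simp only [Real.negMulLog, neg_mul]
  have l1 : Real.log x ≤ Real.log (x + y) := Real.log_le_log hxpos (by linarith)
  have l2 : Real.log y ≤ Real.log (x + y) := Real.log_le_log hypos (by linarith)
  nlinarith

private lemma aux_abs_negMulLog_sub' {x y : ℝ} (hy0 : 0 ≤ y) (hyx : y ≤ x) (hx1 : x ≤ 1)
    (hd : x - y ≤ 1/2) :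
    |Real.negMulLog x - Real.negMulLog y| ≤ Real.negMulLog (x - y) := by
  set d : ℝ := x - y with hdd
  have hd0 : 0 ≤ d := by simp [hdd]; linarith
  rw [abs_le]
  constructor
  · -- η y − η x ≤ η d, i.e. −η d ≤ η x − η y
    have four : Real.negMulLog y + Real.negMulLog 1 ≤
        Real.negMulLog (1 - d) + Real.negMulLog x := by
      apply aux_fourpoint hy0 (by linarith) hyx (by linarith) hx1 (by ring)
    have l1 := aux_negMulLog_one_sub_le hd0 hd
    simp only [Real.negMulLog_one, add_zero] at four
    linarith
  · -- η x − η y ≤ η d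
    have : Real.negMulLog (y + d) ≤ Real.negMulLog y + Real.negMulLog d :=
      aux_negMulLog_add_le hy0 hd0
    have hyd : y + d = x := by simp [hdd]
    rw [hyd] at this
    linarith

private lemma aux_abs_negMulLog_sub {x y : ℝ} (hx0 : 0 ≤ x) (hx1 : x ≤ 1)
    (hy0 : 0 ≤ y) (hy1 : y ≤ 1) (hd : |x - y| ≤ 1/2) :
    |Real.negMulLog x - Real.negMulLog y| ≤ Real.negMulLog |x - y| := by
  rcases le_total y x with h | h
  · rw [abs_of_nonneg (by linarith : (0:ℝ) ≤ x - y)] at hd ⊢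
    exact aux_abs_negMulLog_sub' hy0 h hx1 hd
  · rw [abs_of_nonpos (by linarith : x - y ≤ 0)] at hd ⊢
    rw [abs_sub_comm]
    have := aux_abs_negMulLog_sub' hx0 h hy1 (by linarith)
    simpa [neg_sub] using this

private lemma aux_sum_negMulLog_le {Z : Type*} [Fintype Z] (d : Z → ℝ) (hd : ∀ z, 0 ≤ d z)
    (hn : 0 < (Fintype.card Z : ℝ)) (hδ : 0 < ∑ z, d z) :
    ∑ z, Real.negMulLog (d z) ≤
      (∑ z, d z) * Real.log ((Fintype.card Z : ℝ) / ∑ z, d z) := by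
  set δ : ℝ := ∑ z, d z with hδdef
  set n : ℝ := (Fintype.card Z : ℝ) with hndef
  have key : ∀ z, Real.negMulLog (d z) ≤ d z * Real.log (n / δ) + (δ / n - d z) := by
    intro z
    rcases (hd z).eq_or_lt with h | h
    · simp [← h, Real.negMulLog]
      positivity
    · have hpos : 0 < δ / (n * d z) := by positivity
      have hlog := Real.log_le_sub_one_of_pos hpos
      have hexp : Real.log (δ / (n * d z)) = Real.log δ - Real.log n - Real.log (d z) := by
        rw [Real.log_div (ne_of_gt hδ) (by positivity), Real.log_mul (ne_of_gt hn) (ne_of_gt h)]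
        ring
      have hnd : Real.log (n / δ) = Real.log n - Real.log δ :=
        Real.log_div (ne_of_gt hn) (ne_of_gt hδ)
      have hdz : d z * (δ / (n * d z) - 1) = δ / n - d z := by
        field_simp
      have : d z * Real.log (δ / (n * d z)) ≤ δ / n - d z := by
        calc d z * Real.log (δ / (n * d z)) ≤ d z * (δ / (n * d z) - 1) := by
              exact mul_le_mul_of_nonneg_left hlog (hd z)
          _ = δ / n - d z := hdz
      rw [hexp] at this
      simp only [Real.negMulLog, neg_mul, hnd]
      nlinarith
  calc ∑ z, Real.negMulLog (d z) ≤ ∑ z, (d z * Real.log (n / δ) + (δ / n - d z)) :=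
        Finset.sum_le_sum fun z _ => key z
    _ = δ * Real.log (n / δ) + ((Fintype.card Z : ℝ) * (δ / n) - δ) := by
        rw [Finset.sum_add_distrib, ← Finset.sum_mul, Finset.sum_sub_distrib]
        simp [← hδdef, mul_comm, Finset.sum_const, Finset.card_univ, nsmul_eq_mul]
    _ = δ * Real.log (n / δ) := by
        have hc : (Fintype.card Z : ℝ) * (δ / n) = δ := by
          rw [hndef] at hn ⊢
          field_simp
        rw [hc]
        ring

/-- Continuity of relative entropy in its first argument: the identity
`D(Q₁‖P) − D(Q₂‖P) = H(Q₂) − H(Q₁) − Σ (Q₁−Q₂) log₂ P`, and under `‖Q₁−Q₂‖₁ ≤ 1/2`,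
`|D(Q₁‖P) − D(Q₂‖P)| ≤ ‖Q₁−Q₂‖₁·log₂(|𝒵|/‖Q₁−Q₂‖₁) + ‖Q₁−Q₂‖₁·log₂(1/p_min)`. -/
theorem relEntropy_continuity
    {Z : Type*} [Fintype Z] [Nonempty Z]
    (P Q₁ Q₂ : Z → ℝ)
    (hPpos : ∀ z, 0 < P z) (hP1 : ∑ z, P z = 1)
    (hQ₁0 : ∀ z, 0 ≤ Q₁ z) (hQ₁1 : ∑ z, Q₁ z = 1)
    (hQ₂0 : ∀ z, 0 ≤ Q₂ z) (hQ₂1 : ∑ z, Q₂ z = 1)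
    (pmin : ℝ) (hpmin : IsLeast (Set.range P) pmin) :
    ((∑ z, Q₁ z * Real.logb 2 (Q₁ z / P z)) - (∑ z, Q₂ z * Real.logb 2 (Q₂ z / P z)) =
      (-∑ z, Q₂ z * Real.logb 2 (Q₂ z)) - (-∑ z, Q₁ z * Real.logb 2 (Q₁ z)) -
        ∑ z, (Q₁ z - Q₂ z) * Real.logb 2 (P z)) ∧
    (∑ z, |Q₁ z - Q₂ z| ≤ 1 / 2 →
      |(∑ z, Q₁ z * Real.logb 2 (Q₁ z / P z)) - ∑ z, Q₂ z * Real.logb 2 (Q₂ z / P z)| ≤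
        (∑ z, |Q₁ z - Q₂ z|) * Real.logb 2 ((Fintype.card Z : ℝ) / ∑ z, |Q₁ z - Q₂ z|) +
        (∑ z, |Q₁ z - Q₂ z|) * Real.logb 2 (1 / pmin)) := by
  have key : ∀ (Q : Z → ℝ), (∀ z, 0 ≤ Q z) →
      ∑ z, Q z * Real.logb 2 (Q z / P z)
        = (∑ z, Q z * Real.logb 2 (Q z)) - ∑ z, Q z * Real.logb 2 (P z) := by
    intro Q hQ
    rw [← Finset.sum_sub_distrib]
    refine Finset.sum_congr rfl fun z _ => ?_
    rcases (hQ z).eq_or_lt with h | h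
    · simp [← h]
    · rw [Real.logb_div (ne_of_gt h) (ne_of_gt (hPpos z))]; ring
  have hsub : ∑ z, (Q₁ z - Q₂ z) * Real.logb 2 (P z)
      = (∑ z, Q₁ z * Real.logb 2 (P z)) - ∑ z, Q₂ z * Real.logb 2 (P z) := by
    rw [← Finset.sum_sub_distrib]
    exact Finset.sum_congr rfl fun z _ => by ring
  have identity : (∑ z, Q₁ z * Real.logb 2 (Q₁ z / P z))
      - (∑ z, Q₂ z * Real.logb 2 (Q₂ z / P z)) =
      (-∑ z, Q₂ z * Real.logb 2 (Q₂ z)) - (-∑ z, Q₁ z * Real.logb 2 (Q₁ z)) -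
        ∑ z, (Q₁ z - Q₂ z) * Real.logb 2 (P z) := by
    rw [key Q₁ hQ₁0, key Q₂ hQ₂0, hsub]; ring
  refine ⟨identity, ?_⟩
  intro hhalf
  set δ : ℝ := ∑ z, |Q₁ z - Q₂ z| with hδdef
  have hδ0 : 0 ≤ δ := Finset.sum_nonneg fun z _ => abs_nonneg _
  rcases hδ0.eq_or_lt with hδz | hδpos
  · -- δ = 0 : Q₁ = Q₂
    have hQeq : ∀ z, Q₁ z = Q₂ z := by
      intro z
      have h0 := (Finset.sum_eq_zero_iff_of_nonneg
        (fun w _ => abs_nonneg (Q₁ w - Q₂ w))).mp hδz.symm z (Finset.mem_univ z)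
      have := abs_eq_zero.mp h0
      linarith
    have hssame : (∑ z, Q₁ z * Real.logb 2 (Q₁ z / P z))
        = ∑ z, Q₂ z * Real.logb 2 (Q₂ z / P z) :=
      Finset.sum_congr rfl fun z _ => by rw [hQeq z]
    rw [hssame, sub_self, abs_zero, ← hδz]
    simp
  · have hL : (0:ℝ) < Real.log 2 := Real.log_pos one_lt_two
    have hb2 : (1:ℝ) < 2 := one_lt_two
    have hQ₁le : ∀ z, Q₁ z ≤ 1 := fun z => by
      calc Q₁ z ≤ ∑ w, Q₁ w :=
            Finset.single_le_sum (fun w _ => hQ₁0 w) (Finset.mem_univ z)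
        _ = 1 := hQ₁1
    have hQ₂le : ∀ z, Q₂ z ≤ 1 := fun z => by
      calc Q₂ z ≤ ∑ w, Q₂ w :=
            Finset.single_le_sum (fun w _ => hQ₂0 w) (Finset.mem_univ z)
        _ = 1 := hQ₂1
    have habs_le : ∀ z, |Q₁ z - Q₂ z| ≤ 1/2 := fun z =>
      le_trans (Finset.single_le_sum (fun w _ => abs_nonneg (Q₁ w - Q₂ w))
        (Finset.mem_univ z)) hhalf
    have hcard : (0:ℝ) < (Fintype.card Z : ℝ) := by
      exact_mod_cast Fintype.card_pos
    -- pointwise entropy bound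
    have hpoint : ∀ z, |Q₁ z * Real.logb 2 (Q₁ z) - Q₂ z * Real.logb 2 (Q₂ z)|
        ≤ Real.negMulLog |Q₁ z - Q₂ z| / Real.log 2 := by
      intro z
      have h1 : Q₁ z * Real.logb 2 (Q₁ z) = -Real.negMulLog (Q₁ z) / Real.log 2 := by
        simp only [Real.negMulLog, Real.logb, neg_mul, neg_neg]
        ring
      have h2 : Q₂ z * Real.logb 2 (Q₂ z) = -Real.negMulLog (Q₂ z) / Real.log 2 := by
        simp only [Real.negMulLog, Real.logb, neg_mul, neg_neg]
        ring
      have h3 : -Real.negMulLog (Q₁ z) / Real.log 2 - -Real.negMulLog (Q₂ z) / Real.log 2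
          = (Real.negMulLog (Q₂ z) - Real.negMulLog (Q₁ z)) / Real.log 2 := by ring
      rw [h1, h2, h3, abs_div, abs_of_pos hL]
      gcongr
      rw [abs_sub_comm]
      exact aux_abs_negMulLog_sub (hQ₁0 z) (hQ₁le z) (hQ₂0 z) (hQ₂le z) (habs_le z)
    have hHD : (-∑ z, Q₂ z * Real.logb 2 (Q₂ z)) - (-∑ z, Q₁ z * Real.logb 2 (Q₁ z))
        = ∑ z, (Q₁ z * Real.logb 2 (Q₁ z) - Q₂ z * Real.logb 2 (Q₂ z)) := by
      rw [Finset.sum_sub_distrib]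
      ring
    have hHbound : |(-∑ z, Q₂ z * Real.logb 2 (Q₂ z)) - (-∑ z, Q₁ z * Real.logb 2 (Q₁ z))|
        ≤ δ * Real.logb 2 ((Fintype.card Z : ℝ) / δ) := by
      rw [hHD]
      calc |∑ z, (Q₁ z * Real.logb 2 (Q₁ z) - Q₂ z * Real.logb 2 (Q₂ z))|
          ≤ ∑ z, |Q₁ z * Real.logb 2 (Q₁ z) - Q₂ z * Real.logb 2 (Q₂ z)| :=
            Finset.abs_sum_le_sum_abs _ _
        _ ≤ ∑ z, Real.negMulLog |Q₁ z - Q₂ z| / Real.log 2 :=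
            Finset.sum_le_sum fun z _ => hpoint z
        _ = (∑ z, Real.negMulLog |Q₁ z - Q₂ z|) / Real.log 2 := by
            rw [Finset.sum_div]
        _ ≤ (δ * Real.log ((Fintype.card Z : ℝ) / δ)) / Real.log 2 := by
            gcongr
            exact aux_sum_negMulLog_le (fun z => |Q₁ z - Q₂ z|)
              (fun z => abs_nonneg _) hcard hδpos
        _ = δ * Real.logb 2 ((Fintype.card Z : ℝ) / δ) := by
            rw [Real.logb]
            ring
    -- bound on the cross term
    have hpminpos : 0 < pmin := by
      obtain ⟨z₀, hz₀⟩ := hpmin.1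
      exact hz₀ ▸ hPpos z₀
    have hpminle : ∀ z, pmin ≤ P z := fun z => hpmin.2 (Set.mem_range_self z)
    have hPle1 : ∀ z, P z ≤ 1 := fun z => by
      calc P z ≤ ∑ w, P w :=
            Finset.single_le_sum (fun w _ => (hPpos w).le) (Finset.mem_univ z)
        _ = 1 := hP1
    have hlogP : ∀ z, |Real.logb 2 (P z)| ≤ Real.logb 2 (1 / pmin) := by
      intro z
      have h1 : Real.logb 2 (P z) ≤ 0 := Real.logb_nonpos hb2 (hPpos z).le (hPle1 z)
      rw [abs_of_nonpos h1, one_div, Real.logb_inv, neg_le_neg_iff]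
      exact Real.logb_le_logb_of_le hb2 hpminpos (hpminle z)
    have hCbound : |∑ z, (Q₁ z - Q₂ z) * Real.logb 2 (P z)|
        ≤ δ * Real.logb 2 (1 / pmin) := by
      calc |∑ z, (Q₁ z - Q₂ z) * Real.logb 2 (P z)|
          ≤ ∑ z, |(Q₁ z - Q₂ z) * Real.logb 2 (P z)| := Finset.abs_sum_le_sum_abs _ _
        _ = ∑ z, |Q₁ z - Q₂ z| * |Real.logb 2 (P z)| := by
            refine Finset.sum_congr rfl fun z _ => abs_mul _ _
        _ ≤ ∑ z, |Q₁ z - Q₂ z| * Real.logb 2 (1 / pmin) :=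
            Finset.sum_le_sum fun z _ =>
              mul_le_mul_of_nonneg_left (hlogP z) (abs_nonneg _)
        _ = δ * Real.logb 2 (1 / pmin) := by rw [← Finset.sum_mul]
    rw [identity]
    calc |(-∑ z, Q₂ z * Real.logb 2 (Q₂ z)) - (-∑ z, Q₁ z * Real.logb 2 (Q₁ z)) -
            ∑ z, (Q₁ z - Q₂ z) * Real.logb 2 (P z)|
        ≤ |(-∑ z, Q₂ z * Real.logb 2 (Q₂ z)) - (-∑ z, Q₁ z * Real.logb 2 (Q₁ z))| +
            |∑ z, (Q₁ z - Q₂ z) * Real.logb 2 (P z)| := abs_sub _ _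
      _ ≤ δ * Real.logb 2 ((Fintype.card Z : ℝ) / δ) + δ * Real.logb 2 (1 / pmin) :=
          add_le_add hHbound hCbound
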